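/- Let r ≥ 2 and let r' ≥ 1 be coprime to r, and let q ≥ 1. If f : ℤ → ZMod r is a polyfractal function that is (q·r')-periodic, then f is already q-periodic. In particular, every r'-periodic polyfractal function f : ℤ → ZMod r is constant. -/

import Mathlib

/-- The integer binomial coefficient `binom(x,δ) = x(x-1)⋯(x-δ+1)/δ!`. -/
noncomputable def ibinom (x : ℤ) (δ : ℕ) : ℤ := Ring.choose x δ

/-- `f : ℤ → ZMod r` is polyfractal if it is represented by a finitely supported
family of coefficients. -/
noncomputable def IsPolyfractal (r : ℕ) (f : ℤ → ZMod r) : Prop :=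
  ∃ c : ℕ →₀ ZMod r, ∀ x : ℤ, f x = c.sum fun δ a => ((ibinom x δ : ℤ) : ZMod r) * a

private lemma aux_dvd (r D j : ℕ) (hr : 2 ≤ r) (hj1 : 1 ≤ j) (hjD : j ≤ D) :
    r ∣ Nat.choose (r ^ (D + 1)) j := by
  set N := r ^ (D + 1) with hN
  have hr0 : r ≠ 0 := by omega
  have hjN : j ≤ N := by
    have h1 : D < 2 ^ D := Nat.lt_two_pow_self
    have h2 : (2:ℕ) ^ D ≤ 2 ^ (D + 1) := Nat.pow_le_pow_right (by norm_num) (by omega)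
    have h3 : (2:ℕ) ^ (D + 1) ≤ N := Nat.pow_le_pow_left hr _
    omega
  have hC : Nat.choose N j ≠ 0 := (Nat.choose_pos hjN).ne'
  have hN1 : 1 ≤ N := Nat.one_le_two_pow.trans (Nat.pow_le_pow_left hr _)
  obtain ⟨i, rfl⟩ : ∃ i, j = i + 1 := ⟨j - 1, by omega⟩
  obtain ⟨M, hM⟩ : ∃ M, N = M + 1 := ⟨N - 1, by omega⟩
  have hiM : i ≤ M := by omega
  have key : N * Nat.choose M i = Nat.choose N (i + 1) * (i + 1) := by
    rw [hM]; exact Nat.add_one_mul_choose_eq M i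
  have hCM : Nat.choose M i ≠ 0 := (Nat.choose_pos hiM).ne'
  rw [← Nat.factorization_le_iff_dvd hr0 hC]
  intro p
  by_cases he : r.factorization p = 0
  · simp [he]
  have hfe : 1 ≤ r.factorization p := by omega
  have h1 : (N * Nat.choose M i).factorization p
      = (Nat.choose N (i + 1) * (i + 1)).factorization p := by rw [key]
  rw [Nat.factorization_mul (by omega) hCM,
      Nat.factorization_mul hC (by omega)] at h1
  have hNf : N.factorization p = (D + 1) * r.factorization p := by
    rw [hN, Nat.factorization_pow]; rfl
  have hj : (i + 1).factorization p < i + 1 := Nat.factorization_lt p (by omega)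
  have hjle : (i + 1).factorization p ≤ D * r.factorization p := by
    have : (i + 1).factorization p ≤ D - 1 := by omega
    have hD : D ≤ D * r.factorization p := Nat.le_mul_of_pos_right D hfe
    omega
  simp only [Finsupp.add_apply] at h1
  rw [hNf] at h1
  have hexp : (D + 1) * r.factorization p = D * r.factorization p + r.factorization p := by ring
  omega

private lemma aux_per (r D : ℕ) (hr : 2 ≤ r) (δ : ℕ) (hδ : δ ≤ D) (x : ℤ) :
    ((ibinom (x + ((r ^ (D + 1) : ℕ) : ℤ)) δ : ℤ) : ZMod r)
      = ((ibinom x δ : ℤ) : ZMod r) := by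
  unfold ibinom
  rw [Ring.add_choose_eq δ (Commute.all _ _)]
  push_cast
  rw [Finset.sum_eq_single ((δ, 0) : ℕ × ℕ)]
  · simp
  · intro b hb hne
    have hmem := Finset.HasAntidiagonal.mem_antidiagonal.mp hb
    have hb2 : 1 ≤ b.2 := by
      rcases Nat.eq_zero_or_pos b.2 with h | h
      · exact absurd (Prod.ext (by omega) h) hne
      · exact h
    have hz : ((Nat.choose (r ^ (D + 1)) b.2 : ℕ) : ZMod r) = 0 := by
      rw [ZMod.natCast_eq_zero_iff]
      exact aux_dvd r D b.2 hr hb2 (by omega)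
    rw [show ((r : ℤ)) ^ (D + 1) = ((r ^ (D + 1) : ℕ) : ℤ) by push_cast; ring,
      Ring.choose_natCast]
    push_cast
    rw [hz, mul_zero]
  · intro h
    exact absurd (Finset.HasAntidiagonal.mem_antidiagonal.mpr (by simp)) h

private lemma period_zsmul (r : ℕ) (f : ℤ → ZMod r) (t : ℤ)
    (ht : ∀ x, f (x + t) = f x) (n : ℤ) : ∀ x : ℤ, f (x + n * t) = f x := by
  induction n using Int.induction_on with
  | zero => simp
  | succ k ih =>
      intro x
      have e : x + ((k : ℤ) + 1) * t = (x + (k : ℤ) * t) + t := by ring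
      rw [e, ht, ih]
  | pred k ih =>
      intro x
      have e : (x + (-(k : ℤ) - 1) * t) + t = x + (-(k : ℤ)) * t := by ring
      have h2 := ht (x + (-(k : ℤ) - 1) * t)
      rw [e] at h2
      rw [← h2, ih]

private lemma key_lemma (r r' q : ℕ) (hr : 2 ≤ r) (hco : Nat.Coprime r r')
    (f : ℤ → ZMod r) (hpoly : IsPolyfractal r f)
    (hper : ∀ x : ℤ, f (x + ((q * r' : ℕ) : ℤ)) = f x) :
    ∀ x : ℤ, f (x + ((q : ℕ) : ℤ)) = f x := by
  obtain ⟨c, hc⟩ := hpoly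
  set D := c.support.sup id with hD
  set N := r ^ (D + 1) with hN
  have hNper : ∀ x : ℤ, f (x + (N : ℤ)) = f x := by
    intro x
    rw [hc, hc]
    apply Finsupp.sum_congr
    intro δ hδ
    rw [aux_per r D hr δ (Finset.le_sup (f := id) hδ)]
  set g := Nat.gcd N (q * r') with hg
  have hgper : ∀ x : ℤ, f (x + (g : ℤ)) = f x := by
    intro x
    have hb := Int.gcd_eq_gcd_ab (N : ℤ) ((q * r' : ℕ) : ℤ)
    have hgc : (Int.gcd (N : ℤ) ((q * r' : ℕ) : ℤ) : ℤ) = (g : ℤ) := by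
      rw [Int.gcd_natCast_natCast]
    rw [hgc] at hb
    have e : x + (g : ℤ)
        = (x + Int.gcdB (N : ℤ) ((q * r' : ℕ) : ℤ) * ((q * r' : ℕ) : ℤ))
            + Int.gcdA (N : ℤ) ((q * r' : ℕ) : ℤ) * (N : ℤ) := by
      rw [hb]; ring
    rw [e, period_zsmul r f (N : ℤ) hNper _,
        period_zsmul r f ((q * r' : ℕ) : ℤ) hper _]
  have hcoN : Nat.Coprime r' N := (Nat.Coprime.pow_left _ hco).symm
  have hgq : g = Nat.gcd N q := Nat.Coprime.gcd_mul_right_cancel_right q hcoN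
  have hdvd : g ∣ q := hgq ▸ Nat.gcd_dvd_right N q
  obtain ⟨m, hm⟩ := hdvd
  intro x
  have e : ((q : ℕ) : ℤ) = (m : ℤ) * (g : ℤ) := by
    rw [hm]; push_cast; ring
  rw [e, period_zsmul r f (g : ℤ) hgper m]

/-- For `r'` coprime to `r ≥ 2`: any `q·r'`-periodic polyfractal map `ℤ → ZMod r` is
already `q`-periodic; in particular, any `r'`-periodic polyfractal map is constant. -/
theorem stmt_15 (r r' q : ℕ) (hr : 2 ≤ r) (hr' : 1 ≤ r') (hco : Nat.Coprime r r')
    (hq : 1 ≤ q) (f : ℤ → ZMod r) (hpoly : IsPolyfractal r f) :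
    ((∀ x : ℤ, f (x + (q * r' : ℕ)) = f x) → ∀ x : ℤ, f (x + (q : ℕ)) = f x) ∧
      ((∀ x : ℤ, f (x + (r' : ℕ)) = f x) → ∃ b : ZMod r, ∀ x : ℤ, f x = b) := by
  constructor
  · intro hper
    exact key_lemma r r' q hr hco f hpoly hper
  · intro hper
    have h1 : ∀ x : ℤ, f (x + ((1 : ℕ) : ℤ)) = f x :=
      key_lemma r r' 1 hr hco f hpoly (by intro x; simpa using hper x)
    have h1' : ∀ x : ℤ, f (x + (1 : ℤ)) = f x := by
      intro x; simpa using h1 x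
    refine ⟨f 0, fun x => ?_⟩
    have := period_zsmul r f 1 h1' x 0
    simpa using this
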